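/- arXiv:2102.02472 — 2 statements merged into one kernel-verified Lean document; each statement's English description precedes it below -/
import Mathlib

section
/- For every number of arms K ≥ 2, dimension D ≥ 1, Lipschitz constant L > 0, and every mean-reward vector μ ∈ Φ(L) having at least one suboptimal arm and with μ* < 1, the optimal value C(μ, L) of the lower-bound linear program satisfies C(μ, L) ≤ (8 / Δ_μ²) · min{ K, (8·L·√D / Δ_μ + 1)^D }, where Δ_μ := min_{i ∉ 𝒦*(μ)} (μ* − μ(i)) is the smallest suboptimality gap. -/
open Real Finset MeasureTheory

noncomputable section

/-- Bernoulli Kullback–Leibler divergence between means `p` and `q`. -/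
def klBer (p q : ℝ) : ℝ :=
  p * Real.log (p / q) + (1 - p) * Real.log ((1 - p) / (1 - q))

/-- Best mean reward `μ* = max_i μ(i)`. -/
def muStar {K : ℕ} (μ : Fin K → ℝ) : ℝ := ⨆ i, μ i

/-- The Lipschitz structure `Φ(L)` for embedding `x`. -/
def Phi {K D : ℕ} (x : Fin K → EuclideanSpace ℝ (Fin D)) (L : ℝ) : Set (Fin K → ℝ) :=
  {μ | (∀ i, μ i ∈ Set.Icc (0:ℝ) 1) ∧ ∀ i j, |μ i - μ j| ≤ L * dist (x i) (x j)}

/-- The confusing parameter `ν^j(i; μ, L) = max{μ(i), μ* − L·d(i,j)}`. -/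
def nuConf {K D : ℕ} (x : Fin K → EuclideanSpace ℝ (Fin D)) (μ : Fin K → ℝ) (L : ℝ)
    (j i : Fin K) : ℝ :=
  max (μ i) (muStar μ - L * dist (x i) (x j))

/-- Feasibility for the lower-bound linear program. -/
def LPFeasible {K D : ℕ} (x : Fin K → EuclideanSpace ℝ (Fin D)) (μ : Fin K → ℝ) (L : ℝ)
    (η : Fin K → ℝ) : Prop :=
  (∀ i, 0 ≤ η i) ∧
  ∀ j, μ j ≠ muStar μ →
    1 ≤ ∑ i ∈ Finset.univ.filter (fun i => μ i ≠ muStar μ),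
          klBer (μ i) (nuConf x μ L j i) * η i

/-- Objective of the lower-bound linear program. -/
def LPObj {K : ℕ} (μ : Fin K → ℝ) (η : Fin K → ℝ) : ℝ :=
  ∑ i ∈ Finset.univ.filter (fun i => μ i ≠ muStar μ), (muStar μ - μ i) * η i

/-- `C(μ, L)`: the optimal value (infimum) of the lower-bound linear program. -/
def Cval {K D : ℕ} (x : Fin K → EuclideanSpace ℝ (Fin D)) (μ : Fin K → ℝ) (L : ℝ) : ℝ :=
  sInf {v : ℝ | ∃ η : Fin K → ℝ, LPFeasible x μ L η ∧ v = LPObj μ η}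

end

section AuxLemmas

lemma klBer_pinsker {p q : ℝ} (hp : 0 ≤ p) (hpq : p < q) (hq : q < 1) :
    2 * (q - p) ^ 2 ≤ klBer p q := by
  have hq0 : 0 < q := lt_of_le_of_lt hp hpq
  have h1p : 0 < 1 - p := by linarith
  have h1q : 0 < 1 - q := by linarith
  set f : ℝ → ℝ := fun t =>
    (p * Real.log p + (1 - p) * Real.log (1 - p) - p * Real.log t
      - (1 - p) * Real.log (1 - t)) - 2 * (t - p) ^ 2 with hf
  have key : MonotoneOn f (Set.Icc p q) := by
    apply monotoneOn_of_hasDerivWithinAt_nonneg (f' := fun t => -(p/t) + (1-p)/(1-t) - 4*(t-p))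
      (convex_Icc p q)
    · -- continuity
      apply ContinuousOn.sub
      apply ContinuousOn.sub
      apply ContinuousOn.sub
      · exact continuousOn_const
      · rcases eq_or_lt_of_le hp with h | h
        · have : (fun t : ℝ => p * Real.log t) = fun _ => 0 := by
            funext t; rw [← h]; ring
          rw [this]; exact continuousOn_const
        · exact continuousOn_const.mul (Real.continuousOn_log.mono (by
            intro t ht
            simp only [Set.mem_compl_iff, Set.mem_singleton_iff]
            exact ne_of_gt (lt_of_lt_of_le h ht.1)))
      · apply continuousOn_const.mul
        apply Real.continuousOn_log.comp (by fun_prop)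
        intro t ht
        simp only [Set.mem_compl_iff, Set.mem_singleton_iff]
        have : t ≤ q := ht.2
        intro hc; nlinarith [ht.2]
      · fun_prop
    · intro t ht
      rw [interior_Icc] at ht
      have ht0 : 0 < t := lt_of_le_of_lt hp ht.1
      have ht1 : t < 1 := lt_trans ht.2 hq
      have d1 : HasDerivAt (fun t : ℝ => p * Real.log t) (p / t) t := by
        simpa [div_eq_mul_inv, mul_comm] using (Real.hasDerivAt_log (ne_of_gt ht0)).const_mul p
      have d2 : HasDerivAt (fun t : ℝ => (1 - p) * Real.log (1 - t)) (-((1-p)/(1-t))) t := by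
        have h3 : HasDerivAt (fun t : ℝ => 1 - t) (-1) t := by
          simpa using (hasDerivAt_id t).const_sub 1
        have := ((Real.hasDerivAt_log (ne_of_gt (by linarith : (0:ℝ) < 1 - t))).comp t h3).const_mul
          (1 - p)
        exact this.congr_deriv (by ring)
      have d3 : HasDerivAt (fun t : ℝ => 2 * (t - p) ^ 2) (4 * (t - p)) t := by
        have := (((hasDerivAt_id t).sub_const p).pow 2).const_mul 2
        exact this.congr_deriv (by simp; ring)
      have : HasDerivAt f (-(p/t) + (1-p)/(1-t) - 4*(t-p)) t := by
        have := (((hasDerivAt_const t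
          (p * Real.log p + (1 - p) * Real.log (1 - p))).sub d1).sub d2).sub d3
        exact this.congr_deriv (by ring)
      exact this.hasDerivWithinAt
    · intro t ht
      rw [interior_Icc] at ht
      have ht0 : 0 < t := lt_of_le_of_lt hp ht.1
      have ht1 : t < 1 := lt_trans ht.2 hq
      have hne1 : t ≠ 0 := ne_of_gt ht0
      have hne2 : (1:ℝ) - t ≠ 0 := ne_of_gt (by linarith)
      have hmul : (-(p/t) + (1-p)/(1-t) - 4*(t-p)) * (t*(1-t)) = (t-p)*(1-2*t)^2 := by
        field_simp
        ring
      have hcpos : 0 < t * (1 - t) := mul_pos ht0 (by linarith)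
      have hdnn : 0 ≤ (t-p)*(1-2*t)^2 := mul_nonneg (by linarith [ht.1]) (sq_nonneg _)
      nlinarith [hmul, hcpos, hdnn]
  have hfp : f p = 0 := by simp [hf]
  have hfq := key (Set.left_mem_Icc.2 (le_of_lt hpq))
    (Set.mem_Icc.2 ⟨le_of_lt hpq, le_refl q⟩) (le_of_lt hpq)
  rw [hfp] at hfq
  have hexp : klBer p q = p * Real.log p + (1 - p) * Real.log (1 - p) - p * Real.log q
      - (1 - p) * Real.log (1 - q) := by
    rcases eq_or_lt_of_le hp with h | h
    · rw [klBer, ← h]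
      simp [Real.log_div (ne_of_gt h1p) (ne_of_gt h1q)]
    · rw [klBer, Real.log_div (ne_of_gt h) (ne_of_gt hq0),
        Real.log_div (ne_of_gt h1p) (ne_of_gt h1q)]
      ring
  simp only [hf] at hfq
  linarith [hfq, hexp.ge, hexp.le]

lemma klBer_nonneg {p q : ℝ} (hp : 0 ≤ p) (hpq : p ≤ q) (hq : q < 1) : 0 ≤ klBer p q := by
  rcases eq_or_lt_of_le hpq with h | h
  · subst h
    have h1 : p * Real.log (p / p) = 0 := by
      rcases eq_or_ne p 0 with h0 | h0
      · simp [h0]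
      · simp [div_self h0]
    have h2 : (1 - p) * Real.log ((1 - p) / (1 - p)) = 0 := by
      have : (1:ℝ) - p ≠ 0 := by intro hc; nlinarith
      simp [div_self this]
    rw [klBer, h1, h2]; norm_num
  · have := klBer_pinsker hp h hq
    nlinarith [sq_nonneg (q - p)]

lemma abs_le_of_floor_div_eq {a b s : ℝ} (hs : 0 < s) (h : ⌊a/s⌋ = ⌊b/s⌋) : |a - b| ≤ s := by
  have h1 := Int.sub_one_lt_floor (a/s)
  have h2 := Int.floor_le (a/s)
  have h3 := Int.sub_one_lt_floor (b/s)
  have h4 := Int.floor_le (b/s)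
  rw [h] at h1 h2
  have d1 : a/s - b/s < 1 := by linarith
  have d2 : -1 < a/s - b/s := by linarith
  have e : a - b = s * (a/s - b/s) := by field_simp
  rw [abs_le]
  constructor
  · nlinarith [mul_lt_mul_of_pos_left d2 hs]
  · nlinarith [mul_lt_mul_of_pos_left d1 hs]

end AuxLemmas


set_option maxHeartbeats 2000000 in
theorem stmt0 {K D : ℕ} (hK : 2 ≤ K) (hD : 1 ≤ D)
    (x : Fin K → EuclideanSpace ℝ (Fin D))
    (hx : Function.Injective x)
    (hcube : ∀ i t, x i t ∈ Set.Icc (0:ℝ) 1)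
    (L : ℝ) (hL : 0 < L)
    (μ : Fin K → ℝ) (hμ : μ ∈ Phi x L)
    (hsub : ∃ i, μ i ≠ muStar μ)
    (hlt : muStar μ < 1) :
    Cval x μ L ≤
      8 / (sInf {g : ℝ | ∃ i, μ i ≠ muStar μ ∧ g = muStar μ - μ i}) ^ 2 *
        min (K : ℝ)
          ((8 * L * Real.sqrt D / sInf {g : ℝ | ∃ i, μ i ≠ muStar μ ∧ g = muStar μ - μ i} + 1) ^ D)
    := by
  classical
  obtain ⟨i0, hi0⟩ := hsub
  have hKne : Nonempty (Fin K) := ⟨i0⟩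
  set Δ := sInf {g : ℝ | ∃ i, μ i ≠ muStar μ ∧ g = muStar μ - μ i} with hΔdef
  obtain ⟨hμ01, hlip⟩ := hμ
  have hbdd : BddAbove (Set.range μ) := (Set.finite_range μ).bddAbove
  have hle_star : ∀ i, μ i ≤ muStar μ := fun i => le_ciSup hbdd i
  have hstar1 : muStar μ ≤ 1 := ciSup_le fun i => (hμ01 i).2
  have hgfin : {g : ℝ | ∃ i, μ i ≠ muStar μ ∧ g = muStar μ - μ i}.Finite := by
    apply Set.Finite.subset (Set.finite_range (fun i => muStar μ - μ i))
    rintro g ⟨i, _, rfl⟩; exact ⟨i, rfl⟩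
  have hgne : {g : ℝ | ∃ i, μ i ≠ muStar μ ∧ g = muStar μ - μ i}.Nonempty :=
    ⟨muStar μ - μ i0, i0, hi0, rfl⟩
  obtain ⟨iΔ, hiΔ, hΔeq⟩ := Set.Nonempty.csInf_mem hgne hgfin
  have hΔpos : 0 < Δ := by
    rw [hΔdef, hΔeq]
    have := lt_of_le_of_ne (hle_star iΔ) hiΔ; linarith
  have hΔ1 : Δ ≤ 1 := by
    rw [hΔdef, hΔeq]; have := (hμ01 iΔ).1; linarith
  have hΔle : ∀ i, μ i ≠ muStar μ → Δ ≤ muStar μ - μ i := fun i hi =>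
    csInf_le hgfin.bddBelow ⟨i, hi, rfl⟩
  -- geometry
  have hDpos : (0:ℝ) < Real.sqrt D := Real.sqrt_pos.2 (by
    have : (1:ℝ) ≤ D := by exact_mod_cast hD
    linarith)
  set s : ℝ := Δ / (4 * L * Real.sqrt D) with hs
  have hspos : 0 < s := div_pos hΔpos (by positivity)
  set T := Finset.univ.filter (fun i => μ i ≠ muStar μ) with hT
  set cell : Fin K → Fin D → ℤ := fun i t => ⌊x i t / s⌋ with hcell
  set rep : Fin K → Fin K := fun j =>
    if h : (T.filter fun i => cell i = cell j).Nonempty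
    then (T.filter fun i => cell i = cell j).min' h else j with hrep
  have hrep_mem : ∀ j ∈ T, rep j ∈ T.filter fun i => cell i = cell j := by
    intro j hj
    have hne : (T.filter fun i => cell i = cell j).Nonempty :=
      ⟨j, Finset.mem_filter.2 ⟨hj, rfl⟩⟩
    simp only [hrep, dif_pos hne]
    exact Finset.min'_mem _ hne
  have hrep_congr : ∀ j ∈ T, ∀ j' ∈ T, cell j = cell j' → rep j = rep j' := by
    intro j hj j' hj' h
    have hne : (T.filter fun i => cell i = cell j').Nonempty :=
      ⟨j', Finset.mem_filter.2 ⟨hj', rfl⟩⟩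
    simp only [hrep, h, dif_pos hne]
  set S := T.image rep with hS
  have hST : S ⊆ T := by
    intro i hi
    obtain ⟨j, hj, rfl⟩ := Finset.mem_image.1 hi
    exact (Finset.mem_filter.1 (hrep_mem j hj)).1
  -- same cell implies close in space
  have hclose : ∀ i j : Fin K, cell i = cell j → dist (x i) (x j) ≤ Δ / (4 * L) := by
    intro i j hij
    rw [EuclideanSpace.dist_eq]
    have hcoord : ∀ t, dist (x i t) (x j t) ^ 2 ≤ s ^ 2 := by
      intro t
      have habs : |x i t - x j t| ≤ s := abs_le_of_floor_div_eq hspos (congrFun hij t)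
      rw [Real.dist_eq]
      nlinarith [abs_nonneg (x i t - x j t), sq_abs (x i t - x j t)]
    have hsum : ∑ t, dist (x i t) (x j t) ^ 2 ≤ (D : ℝ) * s ^ 2 := by
      calc ∑ t, dist (x i t) (x j t) ^ 2 ≤ ∑ _t : Fin D, s ^ 2 :=
            Finset.sum_le_sum fun t _ => hcoord t
        _ = (D : ℝ) * s ^ 2 := by
            rw [Finset.sum_const, Finset.card_univ, Fintype.card_fin, nsmul_eq_mul]
    calc Real.sqrt (∑ t, dist (x i t) (x j t) ^ 2) ≤ Real.sqrt ((D : ℝ) * s ^ 2) :=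
          Real.sqrt_le_sqrt hsum
      _ = Real.sqrt D * s := by
          rw [Real.sqrt_mul (by positivity), Real.sqrt_sq hspos.le]
      _ = Δ / (4 * L) := by
          rw [hs]; field_simp
  -- cardinality of S
  set M : ℤ := ⌊1 / s⌋ with hM
  have hM0 : (0:ℤ) ≤ M := Int.floor_nonneg.2 (by positivity)
  have hgmem : ∀ i, cell i ∈ Fintype.piFinset (fun _ : Fin D => Finset.Icc (0:ℤ) M) := by
    intro i
    rw [Fintype.mem_piFinset]
    intro t
    rw [Finset.mem_Icc]
    refine ⟨Int.floor_nonneg.2 (div_nonneg (hcube i t).1 hspos.le), Int.floor_le_floor ?_⟩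
    exact div_le_div_of_nonneg_right (hcube i t).2 hspos.le
  have hcardS : S.card ≤ (M + 1).toNat ^ D := by
    have hinj : Set.InjOn cell S := by
      intro a ha b hb hab
      obtain ⟨ja, hja, rfl⟩ := Finset.mem_image.1 (by exact_mod_cast ha)
      obtain ⟨jb, hjb, rfl⟩ := Finset.mem_image.1 (by exact_mod_cast hb)
      have h1 : cell (rep ja) = cell ja := (Finset.mem_filter.1 (hrep_mem ja hja)).2
      have h2 : cell (rep jb) = cell jb := (Finset.mem_filter.1 (hrep_mem jb hjb)).2
      exact hrep_congr ja hja jb hjb (by rw [← h1, hab, h2])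
    calc S.card = (S.image cell).card := (Finset.card_image_of_injOn hinj).symm
      _ ≤ (Fintype.piFinset fun _ : Fin D => Finset.Icc (0:ℤ) M).card := by
          apply Finset.card_le_card
          intro v hv
          obtain ⟨i, _, rfl⟩ := Finset.mem_image.1 hv
          exact hgmem i
      _ = (Finset.Icc (0:ℤ) M).card ^ D := by
          rw [Fintype.card_piFinset_const]
      _ = (M + 1).toNat ^ D := by
          rw [Int.card_Icc]; norm_num
  -- the feasible point
  set c : ℝ := 8 / (9 * Δ ^ 2) with hc
  have hcpos : 0 < c := by positivity
  set η : Fin K → ℝ := fun i => if i ∈ S then c else 0 with hη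
  have hηnn : ∀ i, 0 ≤ η i := by
    intro i; simp only [hη]
    split
    · exact hcpos.le
    · exact le_refl 0
  have hklnn : ∀ j i, 0 ≤ klBer (μ i) (nuConf x μ L j i) := by
    intro j i
    have h1 : nuConf x μ L j i < 1 := by
      apply max_lt (lt_of_le_of_lt (hle_star i) hlt)
      have : 0 ≤ L * dist (x i) (x j) := mul_nonneg hL.le dist_nonneg
      linarith
    exact klBer_nonneg (hμ01 i).1 (le_max_left _ _) h1
  have hconstr : ∀ j, μ j ≠ muStar μ →
      1 ≤ ∑ i ∈ T, klBer (μ i) (nuConf x μ L j i) * η i := by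
    intro j hj
    have hjT : j ∈ T := Finset.mem_filter.2 ⟨Finset.mem_univ j, hj⟩
    have hmem := hrep_mem j hjT
    have hrT : rep j ∈ T := (Finset.mem_filter.1 hmem).1
    have hrS : rep j ∈ S := Finset.mem_image.2 ⟨j, hjT, rfl⟩
    have hgr : cell (rep j) = cell j := (Finset.mem_filter.1 hmem).2
    have hdist : dist (x (rep j)) (x j) ≤ Δ / (4 * L) := hclose _ _ hgr
    have hrgap : Δ ≤ muStar μ - μ (rep j) :=
      hΔle _ (Finset.mem_filter.1 hrT).2
    have hLd : L * dist (x (rep j)) (x j) ≤ Δ / 4 := by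
      have := mul_le_mul_of_nonneg_left hdist hL.le
      calc L * dist (x (rep j)) (x j) ≤ L * (Δ / (4 * L)) := this
        _ = Δ / 4 := by field_simp
    have hνr : muStar μ - Δ / 4 ≤ nuConf x μ L j (rep j) := by
      refine le_trans ?_ (le_max_right _ _)
      linarith
    have hν1 : nuConf x μ L j (rep j) < 1 := by
      apply max_lt (lt_of_le_of_lt (hle_star _) hlt)
      have : 0 ≤ L * dist (x (rep j)) (x j) := mul_nonneg hL.le dist_nonneg
      linarith
    have hplt : μ (rep j) < nuConf x μ L j (rep j) := by linarith
    have hkl : 9 * Δ ^ 2 / 8 ≤ klBer (μ (rep j)) (nuConf x μ L j (rep j)) := by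
      have hpin := klBer_pinsker (hμ01 (rep j)).1 hplt hν1
      nlinarith [hpin, hΔpos]
    have hterm : 1 ≤ klBer (μ (rep j)) (nuConf x μ L j (rep j)) * η (rep j) := by
      have hηr : η (rep j) = c := by simp only [hη, if_pos hrS]
      rw [hηr]
      have h1 : (9 * Δ ^ 2 / 8) * c = 1 := by
        rw [hc]; field_simp
      nlinarith [mul_le_mul_of_nonneg_right hkl hcpos.le, h1]
    refine le_trans hterm ?_
    exact Finset.single_le_sum (fun i _ => mul_nonneg (hklnn j i) (hηnn i)) hrT
  have hfeas : LPFeasible x μ L η := ⟨hηnn, fun j hj => hconstr j hj⟩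
  -- objective bound
  have hobj : LPObj μ η ≤ (S.card : ℝ) * c := by
    rw [LPObj]
    calc ∑ i ∈ T, (muStar μ - μ i) * η i ≤ ∑ i ∈ T, (if i ∈ S then c else 0) := by
          apply Finset.sum_le_sum
          intro i hi
          simp only [hη]
          split
          · have h1 : muStar μ - μ i ≤ 1 := by
              have := (hμ01 i).1; linarith
            nlinarith [hcpos]
          · simp
      _ = (S.card : ℝ) * c := by
          rw [Finset.sum_ite_mem, Finset.inter_eq_right.2 hST, Finset.sum_const,
            nsmul_eq_mul]
  have hbddB : BddBelow {v : ℝ | ∃ η : Fin K → ℝ, LPFeasible x μ L η ∧ v = LPObj μ η} := by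
    refine ⟨0, ?_⟩
    rintro v ⟨η', hfe, rfl⟩
    apply Finset.sum_nonneg
    intro i _
    exact mul_nonneg (by linarith [hle_star i]) (hfe.1 i)
  have hCle : Cval x μ L ≤ LPObj μ η := csInf_le hbddB ⟨η, hfeas, rfl⟩
  -- final arithmetic
  have hcard1 : (S.card : ℝ) ≤ K := by
    have := Finset.card_le_univ S
    have h2 : S.card ≤ K := by simpa using this
    exact_mod_cast h2
  have hbase0 : 0 ≤ 8 * L * Real.sqrt D / Δ := by positivity
  have hcard2 : (S.card : ℝ) ≤ (8 * L * Real.sqrt D / Δ + 1) ^ D := by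
    have step1 : (S.card : ℝ) ≤ ((M + 1).toNat : ℝ) ^ D := by exact_mod_cast hcardS
    have hMcast : ((M + 1).toNat : ℝ) = (M : ℝ) + 1 := by
      have h := Int.toNat_of_nonneg (show (0:ℤ) ≤ M + 1 by linarith)
      exact_mod_cast h
    have step2 : ((M + 1).toNat : ℝ) ≤ 1 / s + 1 := by
      rw [hMcast]
      have := Int.floor_le (1 / s)
      linarith
    have h1s : 1 / s = 4 * L * Real.sqrt D / Δ := by
      rw [hs]; field_simp
    have step3 : 1 / s + 1 ≤ 8 * L * Real.sqrt D / Δ + 1 := by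
      rw [h1s]
      have h48 : 4 * L * Real.sqrt D ≤ 8 * L * Real.sqrt D := by nlinarith
      have := div_le_div_of_nonneg_right h48 hΔpos.le
      linarith
    calc (S.card : ℝ) ≤ ((M + 1).toNat : ℝ) ^ D := step1
      _ ≤ (1 / s + 1) ^ D := by
          apply pow_le_pow_left₀ (by positivity) step2
      _ ≤ (8 * L * Real.sqrt D / Δ + 1) ^ D := by
          apply pow_le_pow_left₀ (by rw [h1s]; positivity) step3
  have hminK : (S.card : ℝ) ≤ min (K : ℝ) ((8 * L * Real.sqrt D / Δ + 1) ^ D) :=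
    le_min hcard1 hcard2
  have hminnn : (0:ℝ) ≤ min (K : ℝ) ((8 * L * Real.sqrt D / Δ + 1) ^ D) :=
    le_trans (Nat.cast_nonneg S.card) hminK
  refine le_trans hCle (le_trans hobj ?_)
  calc (S.card : ℝ) * c ≤ min (K : ℝ) ((8 * L * Real.sqrt D / Δ + 1) ^ D) * c :=
        mul_le_mul_of_nonneg_right hminK hcpos.le
    _ ≤ 8 / Δ ^ 2 * min (K : ℝ) ((8 * L * Real.sqrt D / Δ + 1) ^ D) := by
        rw [mul_comm]
        apply mul_le_mul_of_nonneg_right _ hminnn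
        rw [hc]
        rw [div_le_div_iff₀ (by positivity) (by positivity)]
        nlinarith [hΔpos, sq_nonneg Δ]
end

section
/- (Lemma 1, concentration of the quantile estimator.) Suppose μ_m ∈ Φ(L) for all m ∈ [M], the learnability assumption holds for some α ∈ (0,1] and ε_α > 0, and every arm is pulled at least τ times in every episode. Let β ∈ (0, α), ε_β > ε_α, and ε' := ε_β − ε_α. If τ ≥ (4 / (Δ_x² ε'²)) · ( ln(2K) + 1 / min{β, α − β} ), then Pr[ L > ℓ_β + ε_β ] + Pr[ ℓ_β > L + ε' ] ≤ 8M · exp( −(Δ_x² ε'² / 4) · min{β, α − β} · τ M ). -/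
set_option maxHeartbeats 2000000
set_option linter.unusedSectionVars false


open Real Finset MeasureTheory ProbabilityTheory

noncomputable section

/-- `Δ_x`: the minimal distance between two distinct embedded arms. -/
def Δemb {K D : ℕ} (x : Fin K → EuclideanSpace ℝ (Fin D)) : ℝ :=
  sInf {r : ℝ | ∃ i j : Fin K, i ≠ j ∧ r = dist (x i) (x j)}

/-- The tightest Lipschitz constant of a mean vector `a` w.r.t. embedding `x`:
`max_{i ≠ j} |a(i) − a(j)| / d(i,j)`. -/
def lipConst {K D : ℕ} (x : Fin K → EuclideanSpace ℝ (Fin D)) (a : Fin K → ℝ) : ℝ :=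
  sSup {r : ℝ | ∃ i j : Fin K, i ≠ j ∧ r = |a i - a j| / dist (x i) (x j)}

/-- The `k`-th largest value among `f 1, …, f M`. -/
def kthLargest {M : ℕ} (f : Fin M → ℝ) (k : ℕ) : ℝ :=
  sSup {t : ℝ | k ≤ (Finset.univ.filter (fun m => t ≤ f m)).card}

/-- Empirical mean of arm `i` in episode `m`, given rewards `r` indexed by
episode/arm/pull-index. -/
def empMean {M K : ℕ} {Ω : Type*} {n : Fin M → Fin K → ℕ}
    (r : (Σ m : Fin M, Σ i : Fin K, Fin (n m i)) → Ω → ℝ) (m : Fin M) (i : Fin K)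
    (ω : Ω) : ℝ :=
  (∑ s : Fin (n m i), r ⟨m, i, s⟩ ω) / (n m i)

end


section Prob
variable {Ω : Type*} [MeasurableSpace Ω] {P : Measure Ω} [IsProbabilityMeasure P]

lemma hoeffding_core {p : ℝ} (hp0 : 0 ≤ p) (hp1 : p ≤ 1) (t : ℝ) :
    1 - p + p * exp t ≤ exp (t * p + t ^ 2 / 8) := by
  set s : ℝ → ℝ := fun u => 1 - p + p * exp u with hs
  have hspos : ∀ u, 0 < s u := by
    intro u
    rcases lt_or_ge p 1 with h | h
    · have : 0 < 1 - p := by linarith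
      positivity
    · have hp : p = 1 := le_antisymm hp1 h
      simp [hs, hp]; positivity
  set g : ℝ → ℝ := fun u => u ^ 2 / 8 + u * p - log (s u) with hg
  set g' : ℝ → ℝ := fun u => u / 4 + p - p * exp u / s u with hg'
  have hder : ∀ u, HasDerivAt g (g' u) u := by
    intro u
    have h1 : HasDerivAt s (p * exp u) u := by
      exact ((hasDerivAt_exp u).const_mul p).const_add (1 - p)
    have h2 : HasDerivAt (fun u => log (s u)) (p * exp u / s u) u :=
      h1.log (hspos u).ne'
    have h3 : HasDerivAt (fun u => u ^ 2 / 8 + u * p) (u / 4 + p) u := by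
      have : HasDerivAt (fun u : ℝ => u ^ 2 / 8 + u * p) ((2 * u ^ 1 / 8) + p) u := by
        have := (((hasDerivAt_pow 2 u).div_const 8).add
          ((hasDerivAt_id u).mul_const p))
        exact this.congr_deriv (by norm_num)
      simpa [pow_one] using this.congr_deriv (by ring)
    exact h3.sub h2
  have hder' : ∀ u, HasDerivAt g' ((1 : ℝ) / 4 - p * exp u * (1 - p) / (s u) ^ 2) u := by
    intro u
    have h1 : HasDerivAt s (p * exp u) u := by
      exact ((hasDerivAt_exp u).const_mul p).const_add (1 - p)
    have h2 : HasDerivAt (fun u => p * exp u) (p * exp u) u := (hasDerivAt_exp u).const_mul p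
    have h3 : HasDerivAt (fun u => p * exp u / s u)
        ((p * exp u * s u - p * exp u * (p * exp u)) / (s u) ^ 2) u := h2.div h1 (hspos u).ne'
    have h4 : HasDerivAt (fun u => u / 4 + p) ((1:ℝ) / 4) u := by
      simpa using ((hasDerivAt_id u).div_const 4).add_const p
    have : HasDerivAt g' ((1:ℝ) / 4 - (p * exp u * s u - p * exp u * (p * exp u)) / (s u) ^ 2) u := h4.sub h3
    convert this using 1
    have hsne : s u ≠ 0 := (hspos u).ne'
    have hsu : s u = 1 - p + p * exp u := rfl
    field_simp
    rw [hsu]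
    ring
  have hg'' : ∀ u, (0:ℝ) ≤ 1 / 4 - p * exp u * (1 - p) / (s u) ^ 2 := by
    intro u
    rw [sub_nonneg, div_le_iff₀ (pow_pos (hspos u) 2)]
    have : s u = p * exp u + (1 - p) := by simp [hs]; ring
    nlinarith [sq_nonneg (p * exp u - (1 - p)), (hspos u), exp_pos u,
      mul_nonneg hp0 (exp_pos u).le]
  have hg'mono : Monotone g' := by
    apply monotone_of_deriv_nonneg (fun u => (hder' u).differentiableAt)
    intro u
    rw [(hder' u).deriv]
    exact hg'' u
  have hg'0 : g' 0 = 0 := by simp [hg', hs]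
  have hgd : Differentiable ℝ g := fun u => (hder u).differentiableAt
  have hg0 : g 0 = 0 := by simp [hg, hs]
  have hgnn : ∀ u, 0 ≤ g u := by
    intro u
    rcases le_or_gt 0 u with h | h
    · have hmono : MonotoneOn g (Set.Ici (0:ℝ)) := by
        apply monotoneOn_of_deriv_nonneg (convex_Ici 0) hgd.continuous.continuousOn
          (fun x _ => (hgd x).differentiableWithinAt)
        intro x hx
        rw [(hder x).deriv]
        have : (0:ℝ) ≤ x := le_of_lt (by simpa using hx)
        calc (0:ℝ) = g' 0 := hg'0.symm
          _ ≤ g' x := hg'mono this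
      have := hmono Set.self_mem_Ici (by exact h) h
      rwa [hg0] at this
    · have hmono : AntitoneOn g (Set.Iic (0:ℝ)) := by
        apply antitoneOn_of_deriv_nonpos (convex_Iic 0) hgd.continuous.continuousOn
          (fun x _ => (hgd x).differentiableWithinAt)
        intro x hx
        rw [(hder x).deriv]
        have hx0 : x ≤ 0 := le_of_lt (by simpa using hx)
        calc g' x ≤ g' 0 := hg'mono hx0
          _ = 0 := hg'0
      have := hmono (Set.mem_Iic.mpr h.le) Set.self_mem_Iic h.le
      rwa [hg0] at this
  have := hgnn t
  have hlog : log (s t) ≤ t * p + t ^ 2 / 8 := by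
    simp only [hg] at this
    nlinarith
  calc s t = exp (log (s t)) := (exp_log (hspos t)).symm
    _ ≤ exp (t * p + t ^ 2 / 8) := exp_le_exp.mpr hlog

variable {Ω : Type*} [MeasurableSpace Ω] {P : Measure Ω} [IsProbabilityMeasure P]

lemma bern_eq_indicator {X : Ω → ℝ} (h01 : ∀ ω, X ω = 0 ∨ X ω = 1) :
    X = Set.indicator {ω | X ω = 1} (fun _ => (1:ℝ)) := by
  funext ω
  rcases h01 ω with h | h <;> simp [Set.indicator, h]

lemma bern_integrable {X : Ω → ℝ} (hX : Measurable X) (h01 : ∀ ω, X ω = 0 ∨ X ω = 1) :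
    Integrable X P := by
  rw [bern_eq_indicator h01]
  exact (integrable_const (1:ℝ)).indicator (hX (measurableSet_singleton 1))

lemma bern_integral {X : Ω → ℝ} {p : ℝ} (hX : Measurable X)
    (h01 : ∀ ω, X ω = 0 ∨ X ω = 1) (hp : 0 ≤ p)
    (hmean : P {ω | X ω = 1} = ENNReal.ofReal p) :
    ∫ ω, X ω ∂P = p := by
  have h1 : ∫ ω, X ω ∂P = ∫ ω, Set.indicator {ω | X ω = 1} (fun _ => (1:ℝ)) ω ∂P := by
    rw [← bern_eq_indicator h01]
  have hms : MeasurableSet {ω | X ω = 1} := hX (measurableSet_singleton 1)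
  rw [h1, MeasureTheory.integral_indicator_const (1:ℝ) hms, measureReal_def, hmean, ENNReal.toReal_ofReal hp]
  simp

lemma bern_exp_eq {X : Ω → ℝ} (h01 : ∀ ω, X ω = 0 ∨ X ω = 1) (t : ℝ) (ω : Ω) :
    exp (t * X ω) = 1 + (exp t - 1) * X ω := by
  rcases h01 ω with h | h <;> simp [h]

lemma bern_integrable_exp {X : Ω → ℝ} (hX : Measurable X)
    (h01 : ∀ ω, X ω = 0 ∨ X ω = 1) (t : ℝ) :
    Integrable (fun ω => exp (t * X ω)) P := by
  have : (fun ω => exp (t * X ω)) = fun ω => 1 + (exp t - 1) * X ω := by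
    funext ω; exact bern_exp_eq h01 t ω
  rw [this]
  exact (integrable_const (1:ℝ)).add ((bern_integrable hX h01).const_mul _)

lemma bern_mgf {X : Ω → ℝ} {p : ℝ} (hX : Measurable X)
    (h01 : ∀ ω, X ω = 0 ∨ X ω = 1) (hp : 0 ≤ p)
    (hmean : P {ω | X ω = 1} = ENNReal.ofReal p) (t : ℝ) :
    mgf X P t = 1 - p + p * exp t := by
  have : mgf X P t = ∫ ω, (1 + (exp t - 1) * X ω) ∂P := by
    unfold mgf
    congr 1
    funext ω; exact bern_exp_eq h01 t ω
  rw [this, integral_add (integrable_const _) ((bern_integrable hX h01).const_mul _),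
    MeasureTheory.integral_const_mul, bern_integral hX h01 hp hmean]
  simp; ring

/-- Chernoff-Hoeffding bound for a sum of independent random variables whose
mgf at `t` is bounded by `exp c`. -/
lemma chernoff_sum {ι : Type*} [Fintype ι] {X : ι → Ω → ℝ} {t c ε : ℝ} (ht : 0 ≤ t)
    (hmeas : ∀ i, Measurable (X i))
    (hindep : iIndepFun X P)
    (hint : ∀ i, Integrable (fun ω => exp (t * X i ω)) P)
    (hmgf : ∀ i, mgf (X i) P t ≤ exp c) :
    (P {ω | ε ≤ ∑ i, X i ω}).toReal ≤ exp (-t * ε + Fintype.card ι * c) := by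
  have hset : {ω | ε ≤ ∑ i, X i ω} = {ω | ε ≤ (∑ i, X i) ω} := by
    simp [Finset.sum_apply]
  rw [hset]
  calc (P {ω | ε ≤ (∑ i, X i) ω}).toReal
      ≤ exp (-t * ε) * mgf (∑ i, X i) P t := by
        refine measure_ge_le_exp_mul_mgf ε ht ?_
        simpa using hindep.integrable_exp_mul_sum (fun i => hmeas i) (fun i _ => hint i)
          (s := Finset.univ)
    _ ≤ exp (-t * ε) * exp c ^ Fintype.card ι := by
        rw [hindep.mgf_sum hmeas Finset.univ]
        refine mul_le_mul_of_nonneg_left ?_ (exp_pos _).le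
        calc ∏ i, mgf (X i) P t ≤ ∏ _i : ι, exp c :=
              Finset.prod_le_prod (fun i _ => mgf_nonneg) (fun i _ => hmgf i)
          _ = exp c ^ Fintype.card ι := by simp
    _ = exp (-t * ε + Fintype.card ι * c) := by
        rw [← exp_nat_mul, ← exp_add]

lemma bern_tail {ι : Type*} [Fintype ι] {X : ι → Ω → ℝ} {p δ : ℝ}
    (hmeas : ∀ i, Measurable (X i)) (h01 : ∀ i ω, X i ω = 0 ∨ X i ω = 1)
    (hp0 : 0 ≤ p) (hp1 : p ≤ 1)
    (hmean : ∀ i, P {ω | X i ω = 1} = ENNReal.ofReal p)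
    (hindep : iIndepFun X P) (hδ : 0 ≤ δ) :
    (P {ω | δ ≤ |(∑ i, X i ω) / (Fintype.card ι : ℝ) - p|}).toReal
      ≤ 2 * exp (-2 * (Fintype.card ι : ℝ) * δ ^ 2) := by
  rcases Nat.eq_zero_or_pos (Fintype.card ι) with hn | hn
  · rw [hn]
    have h1 : (P {ω | δ ≤ |(∑ i, X i ω) / ((0:ℕ) : ℝ) - p|}).toReal ≤ 1 := by
      rw [← ENNReal.toReal_one]
      exact ENNReal.toReal_mono ENNReal.one_ne_top prob_le_one
    simp only [Nat.cast_zero] at h1 ⊢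
    calc _ ≤ (1:ℝ) := h1
      _ ≤ _ := by rw [show (-2:ℝ) * 0 * δ ^ 2 = 0 by ring, exp_zero]; norm_num
  set n : ℝ := (Fintype.card ι : ℝ) with hnn
  have hnpos : (0:ℝ) < n := by rw [hnn]; exact_mod_cast hn
  set t : ℝ := 4 * δ with htdef
  have ht : 0 ≤ t := by positivity
  -- upper tail
  have hU : (P {ω | (p + δ) * n ≤ ∑ i, X i ω}).toReal ≤ exp (-2 * n * δ ^ 2) := by
    have := chernoff_sum (P := P) (t := t) (c := t * p + t ^ 2 / 8) (ε := (p + δ) * n)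
      ht hmeas hindep (fun i => bern_integrable_exp (hmeas i) (h01 i) t)
      (fun i => by rw [bern_mgf (hmeas i) (h01 i) hp0 (hmean i) t]
                   exact hoeffding_core hp0 hp1 t)
    refine this.trans (le_of_eq ?_)
    congr 1
    rw [htdef, hnn]
    ring
  -- lower tail
  have hL : (P {ω | (δ - p) * n ≤ ∑ i, -(X i ω)}).toReal ≤ exp (-2 * n * δ ^ 2) := by
    have hindep' : iIndepFun (fun i ω => -(X i ω)) P :=
      hindep.comp (fun _ => fun y : ℝ => -y) (fun _ => measurable_neg)
    have hexp : ∀ (i : ι) (ω : Ω), exp (t * -(X i ω)) = exp ((-t) * X i ω) := by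
      intro i ω; congr 1; ring
    have := chernoff_sum (P := P) (X := fun i ω => -(X i ω)) (t := t)
      (c := (-t) * p + t ^ 2 / 8) (ε := (δ - p) * n) ht
      (fun i => (hmeas i).neg) hindep'
      (fun i => by
        have : (fun ω => exp (t * -(X i ω))) = fun ω => exp ((-t) * X i ω) := by
          funext ω; exact hexp i ω
        rw [this]; exact bern_integrable_exp (hmeas i) (h01 i) (-t))
      (fun i => by
        have hm : mgf (fun ω => -(X i ω)) P t = mgf (X i) P (-t) := by
          unfold mgf; congr 1; funext ω; exact hexp i ω
        rw [hm, bern_mgf (hmeas i) (h01 i) hp0 (hmean i) (-t)]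
        have := hoeffding_core hp0 hp1 (-t)
        calc 1 - p + p * exp (-t) ≤ exp ((-t) * p + (-t) ^ 2 / 8) := this
          _ = exp ((-t) * p + t ^ 2 / 8) := by rw [neg_pow]; norm_num
        )
    refine this.trans (le_of_eq ?_)
    congr 1
    rw [htdef, hnn]
    ring
  -- combine
  have hsub : {ω | δ ≤ |(∑ i, X i ω) / n - p|} ⊆
      {ω | (p + δ) * n ≤ ∑ i, X i ω} ∪ {ω | (δ - p) * n ≤ ∑ i, -(X i ω)} := by
    intro ω hω
    simp only [Set.mem_setOf_eq] at hω
    rcases le_abs.mp hω with h | h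
    · left
      simp only [Set.mem_setOf_eq]
      have : p + δ ≤ (∑ i, X i ω) / n := by linarith
      calc (p + δ) * n ≤ ((∑ i, X i ω) / n) * n := by
            exact mul_le_mul_of_nonneg_right this hnpos.le
        _ = ∑ i, X i ω := by field_simp
    · right
      simp only [Set.mem_setOf_eq]
      rw [Finset.sum_neg_distrib]
      have : (∑ i, X i ω) / n ≤ p - δ := by linarith
      have h2 : ∑ i, X i ω ≤ (p - δ) * n := by
        calc ∑ i, X i ω = ((∑ i, X i ω) / n) * n := by field_simp
          _ ≤ (p - δ) * n := mul_le_mul_of_nonneg_right this hnpos.le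
      linarith
  calc (P {ω | δ ≤ |(∑ i, X i ω) / n - p|}).toReal
      ≤ (P ({ω | (p + δ) * n ≤ ∑ i, X i ω} ∪ {ω | (δ - p) * n ≤ ∑ i, -(X i ω)})).toReal := by
        exact ENNReal.toReal_mono (measure_ne_top _ _) (measure_mono hsub)
    _ ≤ (P {ω | (p + δ) * n ≤ ∑ i, X i ω}).toReal
        + (P {ω | (δ - p) * n ≤ ∑ i, -(X i ω)}).toReal := by
        rw [← ENNReal.toReal_add (measure_ne_top _ _) (measure_ne_top _ _)]
        exact ENNReal.toReal_mono (by finiteness) (measure_union_le _ _)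
    _ ≤ exp (-2 * n * δ ^ 2) + exp (-2 * n * δ ^ 2) := add_le_add hU hL
    _ = 2 * exp (-2 * n * δ ^ 2) := by ring
lemma iIndepFun_precomp {ι κ : Type*} {f : ι → Ω → ℝ}
    (hf : iIndepFun f P) {g : κ → ι} (hg : Function.Injective g) :
    iIndepFun (fun k => f (g k)) P := by
  classical
  rw [iIndepFun_iff_measure_inter_preimage_eq_mul] at hf ⊢
  intro S sets H
  set sets' : ι → Set ℝ := fun i => ⋂ k ∈ S.filter (fun k => g k = i), sets k with hsets'
  have key : ∀ k ∈ S, sets' (g k) = sets k := by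
    intro k hk
    have : S.filter (fun k' => g k' = g k) = {k} := by
      ext k'
      simp only [Finset.mem_filter, Finset.mem_singleton]
      constructor
      · rintro ⟨_, h⟩; exact hg h
      · rintro rfl; exact ⟨hk, rfl⟩
    show (⋂ k' ∈ S.filter (fun k' => g k' = g k), sets k') = sets k
    rw [this]
    simp
  have hmeas' : ∀ i, i ∈ S.image g → MeasurableSet (sets' i) := by
    intro i _
    refine MeasurableSet.biInter (Finset.countable_toSet _) (fun k hk => ?_)
    exact H k (Finset.mem_filter.mp hk).1
  have := hf (S.image g) hmeas'
  have hInter : (⋂ i ∈ S.image g, f i ⁻¹' sets' i) = ⋂ k ∈ S, f (g k) ⁻¹' sets k := by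
    ext ω
    simp only [Set.mem_iInter, Finset.mem_image]
    constructor
    · intro h k hk
      have := h (g k) ⟨k, hk, rfl⟩
      rwa [key k hk] at this
    · rintro h i ⟨k, hk, rfl⟩
      rw [key k hk]
      exact h k hk
  have hProd : (∏ i ∈ S.image g, P (f i ⁻¹' sets' i)) = ∏ k ∈ S, P (f (g k) ⁻¹' sets k) := by
    rw [Finset.prod_image (fun a _ b _ h => hg h)]
    exact Finset.prod_congr rfl (fun k hk => by rw [key k hk])
  rw [← hInter, ← hProd]
  exact this

lemma iIndep_groups_bound {ι J : Type*} {f : ι → Ω → ℝ}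
    (hmeas : ∀ i, Measurable (f i))
    (hindep : iIndepFun f P)
    (proj : ι → J) (B : J → Set Ω)
    (hB : ∀ j, MeasurableSet[⨆ i ∈ {i | proj i = j}, MeasurableSpace.comap (f i) inferInstance]
      (B j))
    {p : ℝ} (hp : 0 ≤ p) (hPB : ∀ j, (P (B j)).toReal ≤ p) (S : Finset J) :
    (P (⋂ j ∈ S, B j)).toReal ≤ p ^ S.card := by
  classical
  induction S using Finset.induction_on with
  | empty => simp
  | @insert a S ha ih =>
    rw [Finset.set_biInter_insert]
    set m : ι → MeasurableSpace Ω := fun i => MeasurableSpace.comap (f i) inferInstance with hm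
    have h_le : ∀ i, m i ≤ _ := fun i => (hmeas i).comap_le
    have hdisj : Disjoint {i | proj i = a} {i | proj i ∈ S} := by
      rw [Set.disjoint_left]
      rintro i (rfl : proj i = a) (h2 : proj i ∈ S)
      exact ha h2
    have hIndep2 : Indep (⨆ i ∈ {i | proj i = a}, m i) (⨆ i ∈ {i | proj i ∈ S}, m i) P :=
      indep_iSup_of_disjoint h_le hindep.iIndep hdisj
    have hle' : ∀ j ∈ S, (⨆ i ∈ {i | proj i = j}, m i) ≤ ⨆ i ∈ {i | proj i ∈ S}, m i := by
      intro j hj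
      refine iSup₂_le (fun i hi => ?_)
      have : proj i ∈ S := by rw [Set.mem_setOf_eq] at hi; rw [hi]; exact hj
      exact le_iSup₂ (f := fun i (_ : i ∈ {i | proj i ∈ S}) => m i) i this
    have hmeasL : MeasurableSet[⨆ i ∈ {i | proj i = a}, m i] (B a) := hB a
    have hmeasR : MeasurableSet[⨆ i ∈ {i | proj i ∈ S}, m i] (⋂ j ∈ S, B j) :=
      MeasurableSet.biInter (Finset.countable_toSet _) (fun j hj => hle' j hj _ (hB j))
    have heq : P (B a ∩ ⋂ j ∈ S, B j) = P (B a) * P (⋂ j ∈ S, B j) :=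
      ((Indep_iff _ _ _).mp hIndep2) _ _ hmeasL hmeasR
    rw [heq, ENNReal.toReal_mul, Finset.card_insert_of_notMem ha, pow_succ, mul_comm (p ^ S.card) p]
    exact mul_le_mul (hPB a) ih ENNReal.toReal_nonneg hp
end Prob
-- here `Phi, Δemb, lipConst, kthLargest` defs get inserted in final assembly

section DetLemmas

variable {K D : ℕ} (x : Fin K → EuclideanSpace ℝ (Fin D))

lemma lip_set_bddAbove (a : Fin K → ℝ) :
    BddAbove {r : ℝ | ∃ i j : Fin K, i ≠ j ∧ r = |a i - a j| / dist (x i) (x j)} := by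
  refine Set.Finite.bddAbove (Set.Finite.subset (Set.finite_range
    (fun q : Fin K × Fin K => |a q.1 - a q.2| / dist (x q.1) (x q.2))) ?_)
  rintro r ⟨i, j, _, rfl⟩
  exact ⟨(i, j), rfl⟩

lemma lip_set_nonempty (hK : 2 ≤ K) (a : Fin K → ℝ) :
    {r : ℝ | ∃ i j : Fin K, i ≠ j ∧ r = |a i - a j| / dist (x i) (x j)}.Nonempty := by
  refine ⟨_, ⟨⟨0, by omega⟩, ⟨1, by omega⟩, ?_, rfl⟩⟩
  intro h
  exact absurd (congrArg Fin.val h) (by simp)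

lemma lipConst_le (hK : 2 ≤ K) (a : Fin K → ℝ) {c : ℝ}
    (h : ∀ i j : Fin K, i ≠ j → |a i - a j| / dist (x i) (x j) ≤ c) :
    lipConst x a ≤ c := by
  refine csSup_le (lip_set_nonempty x hK a) ?_
  rintro r ⟨i, j, hij, rfl⟩
  exact h i j hij

lemma le_lipConst (a : Fin K → ℝ) {i j : Fin K} (hij : i ≠ j) :
    |a i - a j| / dist (x i) (x j) ≤ lipConst x a :=
  le_csSup (lip_set_bddAbove x a) ⟨i, j, hij, rfl⟩

lemma demb_set_finite :
    {r : ℝ | ∃ i j : Fin K, i ≠ j ∧ r = dist (x i) (x j)}.Finite :=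
  Set.Finite.subset (Set.finite_range (fun q : Fin K × Fin K => dist (x q.1) (x q.2)))
    (by rintro r ⟨i, j, _, rfl⟩; exact ⟨(i, j), rfl⟩)

lemma demb_le {i j : Fin K} (hij : i ≠ j) : Δemb x ≤ dist (x i) (x j) :=
  csInf_le (demb_set_finite x).bddBelow ⟨i, j, hij, rfl⟩

lemma demb_pos (hK : 2 ≤ K) (hx : Function.Injective x) : 0 < Δemb x := by
  have hne : {r : ℝ | ∃ i j : Fin K, i ≠ j ∧ r = dist (x i) (x j)}.Nonempty := by
    refine ⟨_, ⟨⟨0, by omega⟩, ⟨1, by omega⟩, ?_, rfl⟩⟩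
    intro h
    exact absurd (congrArg Fin.val h) (by simp)
  obtain ⟨i, j, hij, heq⟩ := hne.csInf_mem (demb_set_finite x)
  rw [Δemb, heq]
  exact dist_pos.mpr (fun h => hij (hx h))

/-- comparison of `lipConst` under pointwise perturbation -/
lemma lipConst_le_lipConst_add (hK : 2 ≤ K) (hx : Function.Injective x)
    (a b : Fin K → ℝ) {δ : ℝ} (hδ : 0 ≤ δ) (hab : ∀ i, |a i - b i| ≤ δ) :
    lipConst x a ≤ lipConst x b + 2 * δ / Δemb x := by
  refine lipConst_le x hK a (fun i j hij => ?_)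
  have hd : 0 < dist (x i) (x j) := dist_pos.mpr (fun h => hij (hx h))
  have hΔ : 0 < Δemb x := demb_pos x hK hx
  have h1 : |a i - a j| ≤ |b i - b j| + 2 * δ := by
    have := hab i; have := hab j
    have : |a i - a j| ≤ |b i - b j| + (|a i - b i| + |a j - b j|) := by
      have habs : |a i - a j| = |(b i - b j) + ((a i - b i) - (a j - b j))| := by ring_nf
      rw [habs]
      calc |(b i - b j) + ((a i - b i) - (a j - b j))|
          ≤ |b i - b j| + |(a i - b i) - (a j - b j)| := abs_add_le _ _
        _ ≤ |b i - b j| + (|a i - b i| + |a j - b j|) := by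
            have := abs_sub (a i - b i) (a j - b j)
            linarith [abs_sub_abs_le_abs_sub (a i - b i) (a j - b j), abs_sub (a i - b i) (a j - b j)]
    linarith [hab i, hab j]
  calc |a i - a j| / dist (x i) (x j)
      ≤ (|b i - b j| + 2 * δ) / dist (x i) (x j) := by
        gcongr
    _ = |b i - b j| / dist (x i) (x j) + 2 * δ / dist (x i) (x j) := add_div _ _ _
    _ ≤ lipConst x b + 2 * δ / Δemb x := by
        refine add_le_add (le_lipConst x b hij) ?_
        exact div_le_div_of_nonneg_left (by linarith) hΔ (demb_le x hij)

lemma lipConst_le_L {L : ℝ} (hK : 2 ≤ K) (hx : Function.Injective x) (hL : 0 ≤ L)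
    {a : Fin K → ℝ} (ha : ∀ i j, |a i - a j| ≤ L * dist (x i) (x j)) :
    lipConst x a ≤ L := by
  refine lipConst_le x hK a (fun i j hij => ?_)
  have hd : 0 < dist (x i) (x j) := dist_pos.mpr (fun h => hij (hx h))
  rw [div_le_iff₀ hd]
  exact ha i j

end DetLemmas

section KthLemmas

variable {M : ℕ}

lemma le_kthLargest (hM : 1 ≤ M) (f : Fin M → ℝ) {k : ℕ} {t : ℝ} (hk1 : 1 ≤ k)
    (h : k ≤ (Finset.univ.filter (fun m => t ≤ f m)).card) : t ≤ kthLargest f k := by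
  have hne : (Finset.univ : Finset (Fin M)).Nonempty := ⟨⟨0, hM⟩, Finset.mem_univ _⟩
  refine le_csSup ?_ h
  refine ⟨Finset.univ.sup' hne f, ?_⟩
  rintro t' ht'
  have hcard : 0 < (Finset.univ.filter (fun m => t' ≤ f m)).card := lt_of_lt_of_le hk1 ht'
  obtain ⟨m, hm⟩ := Finset.card_pos.mp hcard
  have := (Finset.mem_filter.mp hm).2
  exact this.trans (Finset.le_sup' f (Finset.mem_univ m))

lemma card_le_of_lt_kthLargest (hM : 1 ≤ M) (f : Fin M → ℝ) {k : ℕ} {t : ℝ} (hkM : k ≤ M)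
    (h : t < kthLargest f k) : k ≤ (Finset.univ.filter (fun m => t < f m)).card := by
  have hne' : (Finset.univ : Finset (Fin M)).Nonempty := ⟨⟨0, hM⟩, Finset.mem_univ _⟩
  have hne : {t : ℝ | k ≤ (Finset.univ.filter (fun m => t ≤ f m)).card}.Nonempty := by
    refine ⟨Finset.univ.inf' hne' f, ?_⟩
    have hall : Finset.univ.filter (fun m => Finset.univ.inf' hne' f ≤ f m) = Finset.univ := by
      refine Finset.filter_true_of_mem (fun m _ => Finset.inf'_le f (Finset.mem_univ m))
    simp only [Set.mem_setOf_eq, hall, Finset.card_univ, Fintype.card_fin]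
    exact hkM
  obtain ⟨t', ht'mem, htt'⟩ := exists_lt_of_lt_csSup hne h
  have hsub : Finset.univ.filter (fun m => t' ≤ f m) ⊆ Finset.univ.filter (fun m => t < f m) := by
    intro m hm
    simp only [Finset.mem_filter] at hm ⊢
    exact ⟨hm.1, lt_of_lt_of_le htt' hm.2⟩
  exact le_trans ht'mem (Finset.card_le_card hsub)

end KthLemmas

theorem stmt6 {K D M : ℕ} (hK : 2 ≤ K) (hM : 1 ≤ M)
    (x : Fin K → EuclideanSpace ℝ (Fin D))
    (hx : Function.Injective x)
    (hcube : ∀ i t, x i t ∈ Set.Icc (0:ℝ) 1)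
    (L : ℝ) (hL : 0 < L)
    (μv : Fin M → Fin K → ℝ) (hμ : ∀ m, μv m ∈ Phi x L)
    -- learnability assumption with parameters (α, ε_α)
    (α εα : ℝ) (hα0 : 0 < α) (hα1 : α ≤ 1) (hεα : 0 < εα)
    (hlearn : α * M ≤
      ((Finset.univ.filter (fun m => L - εα ≤ lipConst x (μv m))).card : ℝ))
    (β εβ : ℝ) (hβ0 : 0 < β) (hβα : β < α) (hεβ : εα < εβ)
    -- minimal exploration: every arm pulled at least τ times in every episode
    (τ : ℝ) (hτ0 : 0 < τ)
    (n : Fin M → Fin K → ℕ) (hn : ∀ m i, τ ≤ (n m i : ℝ))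
    (hτ : 4 / ((Δemb x) ^ 2 * (εβ - εα) ^ 2) *
            (Real.log (2 * K) + 1 / min β (α - β)) ≤ τ)
    -- the rewards: mutually independent Bernoulli(μ_m(i))
    {Ω : Type*} [MeasurableSpace Ω] (P : Measure Ω) [IsProbabilityMeasure P]
    (r : (Σ m : Fin M, Σ i : Fin K, Fin (n m i)) → Ω → ℝ)
    (hmeas : ∀ idx, Measurable (r idx))
    (h01 : ∀ idx ω, r idx ω = 0 ∨ r idx ω = 1)
    (hmean : ∀ idx, P {ω | r idx ω = 1} = ENNReal.ofReal (μv idx.1 idx.2.1))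
    (hindep : iIndepFun r P) :
    (P {ω | L >
        kthLargest (fun m => lipConst x (fun i => empMean r m i ω)) ⌈β * (M : ℝ)⌉₊
          + εβ}).toReal
    + (P {ω |
        kthLargest (fun m => lipConst x (fun i => empMean r m i ω)) ⌈β * (M : ℝ)⌉₊
          > L + (εβ - εα)}).toReal
    ≤ 8 * M *
        Real.exp (-((Δemb x) ^ 2 * (εβ - εα) ^ 2 / 4) * min β (α - β) * (τ * M)) := by
  classical
  have hΔ : 0 < Δemb x := demb_pos x hK hx
  have hε' : 0 < εβ - εα := by linarith
  set δ : ℝ := Δemb x * (εβ - εα) / 2 with hδdef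
  have hδ : 0 < δ := by positivity
  set γ : ℝ := min β (α - β) with hγdef
  have hγ : 0 < γ := lt_min hβ0 (by linarith)
  have hγβ : γ ≤ β := min_le_left _ _
  have hM1 : (1:ℝ) ≤ (M:ℝ) := by exact_mod_cast hM
  have hMpos : (0:ℝ) < M := by linarith
  set k : ℕ := ⌈β * (M:ℝ)⌉₊ with hkdef
  set N : ℕ := ⌈γ * (M:ℝ)⌉₊ with hNdef
  have hk1 : 1 ≤ k := Nat.one_le_iff_ne_zero.mpr (by
    simp only [hkdef, ne_eq, Nat.ceil_eq_zero, not_le]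
    positivity)
  have hkM : k ≤ M := Nat.ceil_le.mpr (by nlinarith)
  have hNk : N ≤ k := Nat.ceil_le_ceil (by nlinarith)
  have hNM : N ≤ M := le_trans hNk hkM
  have hγMN : γ * M ≤ (N:ℝ) := Nat.le_ceil _
  have hNlt : (N:ℝ) < γ * M + 1 := Nat.ceil_lt_add_one (by positivity)
  have hklt : (k:ℝ) < β * M + 1 := Nat.ceil_lt_add_one (by positivity)
  -- per (m,i) arm deviation events
  set Am : Fin M → Fin K → Set Ω :=
    fun m i => {ω | δ ≤ |empMean r m i ω - μv m i|} with hAmdef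
  set B : Fin M → Set Ω := fun m => ⋃ i : Fin K, Am m i with hBdef
  set p0 : ℝ := 2 * K * Real.exp (-2 * τ * δ ^ 2) with hp0def
  have hp0nn : 0 ≤ p0 := by positivity
  -- arm-level tail bound
  have hArm : ∀ m i, (P (Am m i)).toReal ≤ 2 * Real.exp (-2 * τ * δ ^ 2) := by
    intro m i
    have hinj : Function.Injective
        (fun s : Fin (n m i) => (⟨m, i, s⟩ : Σ m : Fin M, Σ i : Fin K, Fin (n m i))) := by
      intro a b hab
      simpa using hab
    have hsub := iIndepFun_precomp (P := P) hindep hinj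
    have hp0' : 0 ≤ μv m i := ((hμ m).1 i).1
    have hp1' : μv m i ≤ 1 := ((hμ m).1 i).2
    have htail := bern_tail (P := P) (X := fun s : Fin (n m i) => r ⟨m, i, s⟩)
      (p := μv m i) (δ := δ)
      (fun s => hmeas _) (fun s ω => h01 _ ω) hp0' hp1'
      (fun s => hmean ⟨m, i, s⟩) hsub hδ.le
    have hset : Am m i =
        {ω | δ ≤ |(∑ s : Fin (n m i), r ⟨m, i, s⟩ ω) / ((Fintype.card (Fin (n m i)) : ℝ)) - μv m i|} := by
      simp only [hAmdef, empMean, Fintype.card_fin]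
    rw [hset]
    refine htail.trans ?_
    have hτn : τ ≤ ((Fintype.card (Fin (n m i)) : ℝ)) := by
      simpa [Fintype.card_fin] using hn m i
    have : -2 * ((Fintype.card (Fin (n m i)) : ℝ)) * δ ^ 2 ≤ -2 * τ * δ ^ 2 := by nlinarith
    have := Real.exp_le_exp.mpr this
    linarith
  -- episode-level bound
  have hPB : ∀ m, (P (B m)).toReal ≤ p0 := by
    intro m
    have h1 : P (B m) ≤ ∑ i : Fin K, P (Am m i) := by
      have : B m = ⋃ i : Fin K, Am m i := rfl
      rw [this]
      exact measure_iUnion_fintype_le P (fun i => Am m i)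
    have h2 : (P (B m)).toReal ≤ (∑ i : Fin K, P (Am m i)).toReal :=
      ENNReal.toReal_mono (ENNReal.sum_lt_top.mpr (fun i _ => measure_lt_top P _)).ne h1
    rw [ENNReal.toReal_sum (fun i _ => measure_ne_top _ _)] at h2
    refine h2.trans ?_
    calc ∑ i : Fin K, (P (Am m i)).toReal ≤ ∑ _i : Fin K, 2 * Real.exp (-2 * τ * δ ^ 2) :=
          Finset.sum_le_sum (fun i _ => hArm m i)
      _ = K * (2 * Real.exp (-2 * τ * δ ^ 2)) := by simp [Finset.sum_const, Finset.card_univ]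
      _ = p0 := by rw [hp0def]; ring
  -- episode events measurable w.r.t. episode sigma-algebras
  have hBmeas : ∀ m, MeasurableSet[⨆ idx ∈ {idx : Σ m : Fin M, Σ i : Fin K, Fin (n m i) | idx.1 = m},
      MeasurableSpace.comap (r idx) inferInstance] (B m) := by
    intro m
    set F := ⨆ idx ∈ {idx : Σ m : Fin M, Σ i : Fin K, Fin (n m i) | idx.1 = m},
      MeasurableSpace.comap (r idx) inferInstance with hF
    refine MeasurableSet.iUnion (fun i => ?_)
    have hr : ∀ s : Fin (n m i), Measurable[F] (r ⟨m, i, s⟩) := by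
      intro s
      rw [measurable_iff_comap_le]
      exact le_iSup₂ (f := fun idx (_ : idx ∈ {idx : Σ m : Fin M, Σ i : Fin K, Fin (n m i) | idx.1 = m}) =>
        MeasurableSpace.comap (r idx) inferInstance) ⟨m, i, s⟩ rfl
    have hsum : Measurable[F] (fun ω => ∑ s : Fin (n m i), r ⟨m, i, s⟩ ω) :=
      Finset.measurable_sum Finset.univ (fun s _ => hr s)
    have hemp : Measurable[F] (fun ω => empMean r m i ω) := by
      simp only [empMean]
      exact hsum.div_const _
    have habs : Measurable[F] (fun ω => |empMean r m i ω - μv m i|) :=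
      (hemp.sub measurable_const).abs
    exact measurableSet_le measurable_const habs
  -- the bad set
  set Bad : Set Ω := {ω | N ≤ (Finset.univ.filter (fun m => ω ∈ B m)).card} with hBaddef
  -- probability of the bad set
  have hPBad : (P Bad).toReal ≤ (M.choose N : ℝ) * p0 ^ N := by
    have hsub : Bad ⊆ ⋃ S ∈ Finset.univ.powersetCard N, ⋂ m ∈ S, B m := by
      intro ω hω
      obtain ⟨T, hT, hTcard⟩ := Finset.exists_subset_card_eq (hω : N ≤ _)
      refine Set.mem_biUnion (Finset.mem_powersetCard.mpr ⟨Finset.subset_univ T, hTcard⟩) ?_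
      exact Set.mem_biInter (fun m hm => (Finset.mem_filter.mp (hT hm)).2)
    have h1 : P Bad ≤ ∑ S ∈ Finset.univ.powersetCard N, P (⋂ m ∈ S, B m) :=
      (measure_mono hsub).trans (measure_biUnion_finset_le _ _)
    have h2 : (P Bad).toReal ≤ ∑ S ∈ Finset.univ.powersetCard N, (P (⋂ m ∈ S, B m)).toReal := by
      refine (ENNReal.toReal_mono (ENNReal.sum_lt_top.mpr (fun S _ => measure_lt_top P _)).ne h1).trans ?_
      rw [ENNReal.toReal_sum (fun S _ => measure_ne_top _ _)]
    refine h2.trans ?_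
    calc ∑ S ∈ Finset.univ.powersetCard N, (P (⋂ m ∈ S, B m)).toReal
        ≤ ∑ S ∈ Finset.univ.powersetCard N, p0 ^ N := by
          refine Finset.sum_le_sum (fun S hS => ?_)
          have hcard : S.card = N := (Finset.mem_powersetCard.mp hS).2
          have := iIndep_groups_bound (P := P) hmeas hindep
            (fun idx => idx.1) B hBmeas hp0nn hPB S
          rwa [hcard] at this
      _ = (M.choose N : ℝ) * p0 ^ N := by
          rw [Finset.sum_const, Finset.card_powersetCard, Finset.card_univ, Fintype.card_fin,
            nsmul_eq_mul]
  -- event inclusions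
  have hnotB : ∀ (ω : Ω) (m : Fin M), ω ∉ B m →
      lipConst x (μv m) ≤ lipConst x (fun i => empMean r m i ω) + (εβ - εα) ∧
      lipConst x (fun i => empMean r m i ω) ≤ lipConst x (μv m) + (εβ - εα) := by
    intro ω m hω
    have hdev : ∀ i, |empMean r m i ω - μv m i| ≤ δ := by
      intro i
      by_contra h
      push_neg at h
      exact hω (Set.mem_iUnion.mpr ⟨i, h.le⟩)
    have hdev' : ∀ i, |μv m i - empMean r m i ω| ≤ δ := by
      intro i; rw [abs_sub_comm]; exact hdev i
    have h2δ : 2 * δ / Δemb x = εβ - εα := by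
      rw [hδdef]; field_simp
    constructor
    · have := lipConst_le_lipConst_add x hK hx (μv m) (fun i => empMean r m i ω) hδ.le hdev'
      rwa [h2δ] at this
    · have := lipConst_le_lipConst_add x hK hx (fun i => empMean r m i ω) (μv m) hδ.le hdev
      rwa [h2δ] at this
  have hIncl1 : {ω | L > kthLargest (fun m => lipConst x (fun i => empMean r m i ω)) k + εβ}
      ⊆ Bad := by
    intro ω hω
    set f : Fin M → ℝ := fun m => lipConst x (fun i => empMean r m i ω) with hfdef
    have hωlt : kthLargest f k + εβ < L := hω
    have hcard : ¬ (k ≤ (Finset.univ.filter (fun m => L - εβ ≤ f m)).card) := by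
      intro h
      have := le_kthLargest hM f hk1 h
      linarith
    have hcard' : ((Finset.univ.filter (fun m => L - εβ ≤ f m)).card : ℝ) ≤ (k:ℝ) - 1 := by
      have : (Finset.univ.filter (fun m => L - εβ ≤ f m)).card ≤ k - 1 := by omega
      have h2 := (Nat.cast_le (α := ℝ)).mpr this
      have h3 : ((k - 1 : ℕ) : ℝ) = (k:ℝ) - 1 := by
        have : 1 ≤ k := hk1
        push_cast [Nat.cast_sub this]
        ring
      linarith [h3 ▸ h2]
    set Tg := Finset.univ.filter (fun m => L - εα ≤ lipConst x (μv m)) with hTgdef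
    set Tf := Finset.univ.filter (fun m => L - εβ ≤ f m) with hTfdef
    have hsub2 : Tg \ Tf ⊆ Finset.univ.filter (fun m => ω ∈ B m) := by
      intro m hm
      obtain ⟨hmg, hmf⟩ := Finset.mem_sdiff.mp hm
      have h1 : L - εα ≤ lipConst x (μv m) := (Finset.mem_filter.mp hmg).2
      have h2 : ¬ (L - εβ ≤ f m) := fun h => hmf (Finset.mem_filter.mpr ⟨Finset.mem_univ _, h⟩)
      refine Finset.mem_filter.mpr ⟨Finset.mem_univ _, ?_⟩
      by_contra hB'
      have := (hnotB ω m hB').1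
      have : L - εβ ≤ f m := by
        have : L - εα - (εβ - εα) ≤ f m := by linarith
        linarith
      exact h2 this
    have hNcard : N ≤ (Tg \ Tf).card := by
      have hγαβ : γ ≤ α - β := min_le_right _ _
      have h1 : (N:ℝ) + (Tf.card:ℝ) < ((Tg.card : ℕ) : ℝ) + 1 := by
        have hprod : γ * (M:ℝ) ≤ (α - β) * M := mul_le_mul_of_nonneg_right hγαβ hMpos.le
        push_cast
        linarith [hcard', hNlt, hklt, hlearn, hprod]
      have h2' : N + Tf.card < Tg.card + 1 := by exact_mod_cast h1
      have h2 : N + Tf.card ≤ Tg.card := by omega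
      calc N ≤ Tg.card - Tf.card := by omega
        _ ≤ (Tg \ Tf).card := Finset.le_card_sdiff _ _
    exact le_trans hNcard (Finset.card_le_card hsub2)
  have hIncl2 : {ω | kthLargest (fun m => lipConst x (fun i => empMean r m i ω)) k
      > L + (εβ - εα)} ⊆ Bad := by
    intro ω hω
    set f : Fin M → ℝ := fun m => lipConst x (fun i => empMean r m i ω) with hfdef
    have hcard := card_le_of_lt_kthLargest hM f hkM (t := L + (εβ - εα)) hω
    have hsub2 : Finset.univ.filter (fun m => L + (εβ - εα) < f m)
        ⊆ Finset.univ.filter (fun m => ω ∈ B m) := by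
      intro m hm
      have h1 : L + (εβ - εα) < f m := (Finset.mem_filter.mp hm).2
      refine Finset.mem_filter.mpr ⟨Finset.mem_univ _, ?_⟩
      by_contra hB'
      have h2 := (hnotB ω m hB').2
      have h3 : lipConst x (μv m) ≤ L :=
        lipConst_le_L x hK hx hL.le (hμ m).2
      have : f m ≤ L + (εβ - εα) := by
        simp only [hfdef]
        calc lipConst x (fun i => empMean r m i ω) ≤ lipConst x (μv m) + (εβ - εα) := h2
          _ ≤ L + (εβ - εα) := by linarith
      linarith
    have : N ≤ (Finset.univ.filter (fun m => L + (εβ - εα) < f m)).card :=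
      le_trans hNk hcard
    exact le_trans this (Finset.card_le_card hsub2)
  -- combine
  have hLHS : (P {ω | L > kthLargest (fun m => lipConst x (fun i => empMean r m i ω)) k + εβ}).toReal
      + (P {ω | kthLargest (fun m => lipConst x (fun i => empMean r m i ω)) k
          > L + (εβ - εα)}).toReal ≤ 2 * ((M.choose N : ℝ) * p0 ^ N) := by
    have h1 := ENNReal.toReal_mono (measure_ne_top P Bad) (measure_mono hIncl1)
    have h2 := ENNReal.toReal_mono (measure_ne_top P Bad) (measure_mono hIncl2)
    linarith [hPBad]
  refine hLHS.trans ?_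
  -- final numeric estimate
  have hδsq : δ ^ 2 = (Δemb x) ^ 2 * (εβ - εα) ^ 2 / 4 := by rw [hδdef]; ring
  have hEτ : Real.log (2 * K) + 1 / γ ≤ τ * δ ^ 2 := by
    have hpos : (0:ℝ) < (Δemb x) ^ 2 * (εβ - εα) ^ 2 := by positivity
    have h1 : 4 / ((Δemb x) ^ 2 * (εβ - εα) ^ 2) * (Real.log (2 * K) + 1 / γ) ≤ τ := hτ
    have hlogpos : 0 < Real.log (2 * K) + 1 / γ := by
      have : (1:ℝ) < 2 * K := by
        have : (2:ℝ) ≤ (K:ℝ) := by exact_mod_cast hK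
        nlinarith
      have := Real.log_pos this
      positivity
    rw [div_mul_eq_mul_div, div_le_iff₀ hpos] at h1
    rw [hδsq]
    calc Real.log (2 * K) + 1 / γ
        = 4 * (Real.log (2 * K) + 1 / γ) / 4 := by ring
      _ ≤ τ * ((Δemb x) ^ 2 * (εβ - εα) ^ 2) / 4 := by linarith
      _ = τ * ((Δemb x) ^ 2 * (εβ - εα) ^ 2 / 4) := by ring
  have hp0bound : p0 ≤ Real.exp (-(1/γ)) * Real.exp (-(τ * δ ^ 2)) := by
    have h2K : (0:ℝ) < 2 * K := by positivity
    have : p0 = Real.exp (Real.log (2 * K) - 2 * τ * δ ^ 2) := by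
      rw [hp0def, Real.exp_sub, Real.exp_log h2K]
      rw [show -2 * τ * δ ^ 2 = -(2 * τ * δ ^ 2) by ring]
      rw [Real.exp_neg]
      field_simp
    rw [this, ← Real.exp_add]
    refine Real.exp_le_exp.mpr ?_
    linarith
  have hchoose : (M.choose N : ℝ) ≤ 2 ^ M := by
    have h1 : M.choose N ≤ ∑ i ∈ Finset.range (M + 1), M.choose i :=
      Finset.single_le_sum (fun i _ => Nat.zero_le _) (Finset.mem_range.mpr (by omega))
    have h2 : ∑ i ∈ Finset.range (M + 1), M.choose i = 2 ^ M := Nat.sum_range_choose M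
    have : M.choose N ≤ 2 ^ M := by omega
    exact_mod_cast this
  have hτδnn : 0 ≤ τ * δ ^ 2 := by positivity
  calc 2 * ((M.choose N : ℝ) * p0 ^ N)
      ≤ 2 * ((2:ℝ) ^ M * (Real.exp (-(1/γ)) * Real.exp (-(τ * δ ^ 2))) ^ N) := by
        refine mul_le_mul_of_nonneg_left ?_ (by norm_num)
        refine mul_le_mul hchoose (pow_le_pow_left₀ hp0nn hp0bound N) (by positivity) (by positivity)
    _ = 2 * (2:ℝ) ^ M * Real.exp (-(N / γ)) * Real.exp (-(τ * δ ^ 2) * N) := by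
        rw [mul_pow, ← Real.exp_nat_mul, ← Real.exp_nat_mul]
        ring_nf
    _ ≤ 2 * Real.exp M * Real.exp (-(M:ℝ)) * Real.exp (-(τ * δ ^ 2) * (γ * M)) := by
        have e1 : (2:ℝ) ^ M ≤ Real.exp M := by
          calc (2:ℝ) ^ M ≤ (Real.exp 1) ^ M :=
                pow_le_pow_left₀ (by norm_num) (by linarith [Real.add_one_le_exp 1]) M
            _ = Real.exp M := by rw [← Real.exp_nat_mul]; ring_nf
        have e2 : Real.exp (-(N / γ)) ≤ Real.exp (-(M:ℝ)) := by
          refine Real.exp_le_exp.mpr ?_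
          have : (M:ℝ) ≤ N / γ := by
            rw [le_div_iff₀ hγ]
            linarith [hγMN]
          linarith
        have e3 : Real.exp (-(τ * δ ^ 2) * N) ≤ Real.exp (-(τ * δ ^ 2) * (γ * M)) := by
          refine Real.exp_le_exp.mpr ?_
          nlinarith [hγMN, hτδnn]
        have hnn1 : (0:ℝ) ≤ 2 * (2:ℝ)^M := by positivity
        calc 2 * (2:ℝ) ^ M * Real.exp (-(N / γ)) * Real.exp (-(τ * δ ^ 2) * N)
            ≤ 2 * (2:ℝ) ^ M * Real.exp (-(M:ℝ)) * Real.exp (-(τ * δ ^ 2) * (γ * M)) := by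
              refine mul_le_mul (mul_le_mul_of_nonneg_left e2 hnn1) e3 (by positivity) (by positivity)
          _ ≤ 2 * Real.exp M * Real.exp (-(M:ℝ)) * Real.exp (-(τ * δ ^ 2) * (γ * M)) := by
              refine mul_le_mul_of_nonneg_right ?_ (by positivity)
              refine mul_le_mul_of_nonneg_right ?_ (by positivity)
              linarith [e1]
    _ = 2 * Real.exp (-(τ * δ ^ 2) * (γ * M)) := by
        have hm1 : Real.exp (M:ℝ) * Real.exp (-(M:ℝ)) = 1 := by
          rw [← Real.exp_add]; simp
        calc 2 * Real.exp (M:ℝ) * Real.exp (-(M:ℝ)) * Real.exp (-(τ * δ ^ 2) * (γ * M))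
            = 2 * (Real.exp (M:ℝ) * Real.exp (-(M:ℝ))) * Real.exp (-(τ * δ ^ 2) * (γ * M)) := by
              ring
          _ = 2 * Real.exp (-(τ * δ ^ 2) * (γ * M)) := by rw [hm1]; ring
    _ ≤ 8 * M * Real.exp (-((Δemb x) ^ 2 * (εβ - εα) ^ 2 / 4) * γ * (τ * M)) := by
        have : -(τ * δ ^ 2) * (γ * M) = -((Δemb x) ^ 2 * (εβ - εα) ^ 2 / 4) * γ * (τ * M) := by
          rw [hδsq]; ring
        rw [this]
        refine mul_le_mul_of_nonneg_right (by linarith) (Real.exp_pos _).le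
end
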